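/- Let N, M ≥ 2, let h, τ > 0 with τ ≤ h², and let u : {0,…,M} × {0,…,N} → ℝ and p : {1,…,M} → ℝ with p^{k+1} > 0 for all k satisfy the homogeneous Crank–Nicolson scheme: for all 0 ≤ k ≤ M−1 and 1 ≤ i ≤ N−1, (1 + τ/h² + τp^{k+1}) u_i^{k+1} − (τ/(2h²))(u_{i+1}^{k+1} + u_{i−1}^{k+1}) = (1 − τ/h²) u_i^k + (τ/(2h²))(u_{i+1}^k + u_{i−1}^k), together with u_0^k = u_N^k = 0 for all k. Then the maximum norm is non-increasing in time: max_{0≤i≤N} |u_i^{k+1}| ≤ max_{0≤i≤N} |u_i^k| for every 0 ≤ k ≤ M−1. -/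
import Mathlib


open Finset

/-- Stability of the homogeneous Crank–Nicolson scheme in the maximum norm:
the maximum norm is non-increasing in time, `‖u^{k+1}‖_∞ ≤ ‖u^k‖_∞`. -/
theorem crank_nicolson_stability_homogeneous
    (N M : ℕ) (hN : 2 ≤ N) (hM : 2 ≤ M)
    (h τ : ℝ) (hh : 0 < h) (hτ : 0 < τ) (hτh : τ ≤ h ^ 2)
    (u : ℕ → ℕ → ℝ) (p : ℕ → ℝ)
    (hp : ∀ k < M, 0 < p (k + 1))
    (scheme : ∀ k < M, ∀ i, 1 ≤ i → i ≤ N - 1 →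
      (1 + τ / h ^ 2 + τ * p (k + 1)) * u (k + 1) i -
          (τ / (2 * h ^ 2)) * (u (k + 1) (i + 1) + u (k + 1) (i - 1)) =
        (1 - τ / h ^ 2) * u k i + (τ / (2 * h ^ 2)) * (u k (i + 1) + u k (i - 1)))
    (hbc : ∀ k ≤ M, u k 0 = 0 ∧ u k N = 0) :
    ∀ k < M,
      Finset.sup' (Finset.range (N + 1)) (Finset.nonempty_range_iff.mpr (Nat.succ_ne_zero N))
          (fun i => |u (k + 1) i|) ≤
        Finset.sup' (Finset.range (N + 1)) (Finset.nonempty_range_iff.mpr (Nat.succ_ne_zero N))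
          (fun i => |u k i|) := by
  intro k hk
  have hne : (Finset.range (N + 1)).Nonempty :=
    Finset.nonempty_range_iff.mpr (Nat.succ_ne_zero N)
  set A := (Finset.range (N + 1)).sup' hne (fun i => |u (k + 1) i|) with hA
  set B := (Finset.range (N + 1)).sup' hne (fun i => |u k i|) with hB
  have hleA : ∀ j, j ≤ N → |u (k + 1) j| ≤ A := by
    intro j hj
    exact Finset.le_sup' (fun i => |u (k + 1) i|) (Finset.mem_range.mpr (by omega))
  have hleB : ∀ j, j ≤ N → |u k j| ≤ B := by
    intro j hj
    exact Finset.le_sup' (fun i => |u k i|) (Finset.mem_range.mpr (by omega))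
  have hA0 : 0 ≤ A := le_trans (abs_nonneg _) (hleA 0 (by omega))
  have hB0 : 0 ≤ B := le_trans (abs_nonneg _) (hleB 0 (by omega))
  obtain ⟨i₀, hi₀s, hi₀⟩ := Finset.exists_mem_eq_sup' hne (fun i => |u (k + 1) i|)
  have hi₀N : i₀ ≤ N := by
    have := Finset.mem_range.mp hi₀s
    omega
  have hAi : A = |u (k + 1) i₀| := hi₀
  by_cases h0 : i₀ = 0
  · rw [hAi, h0, (hbc (k + 1) (by omega)).1, abs_zero]; exact hB0
  by_cases hNi : i₀ = N
  · rw [hAi, hNi, (hbc (k + 1) (by omega)).2, abs_zero]; exact hB0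
  have h1 : 1 ≤ i₀ := by omega
  have h2 : i₀ ≤ N - 1 := by omega
  have E := scheme k hk i₀ h1 h2
  have hh2 : (0:ℝ) < h ^ 2 := by positivity
  have ha1 : τ / h ^ 2 ≤ 1 := by rw [div_le_one hh2]; exact hτh
  have hc : 0 < τ / (2 * h ^ 2) := by positivity
  have h2c : τ / h ^ 2 = 2 * (τ / (2 * h ^ 2)) := by ring
  have hp' := hp k hk
  have b1 : |u (k + 1) (i₀ + 1)| ≤ A := hleA _ (by omega)
  have b2 : |u (k + 1) (i₀ - 1)| ≤ A := hleA _ (by omega)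
  have b3 : |u k i₀| ≤ B := hleB _ (by omega)
  have b4 : |u k (i₀ + 1)| ≤ B := hleB _ (by omega)
  have b5 : |u k (i₀ - 1)| ≤ B := hleB _ (by omega)
  have v1 : u (k + 1) (i₀ + 1) ≤ A := le_trans (le_abs_self _) b1
  have v1' : -A ≤ u (k + 1) (i₀ + 1) := le_trans (neg_le_neg b1) (neg_abs_le _)
  have v2 : u (k + 1) (i₀ - 1) ≤ A := le_trans (le_abs_self _) b2
  have v2' : -A ≤ u (k + 1) (i₀ - 1) := le_trans (neg_le_neg b2) (neg_abs_le _)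
  have w3 : u k i₀ ≤ B := le_trans (le_abs_self _) b3
  have w3' : -B ≤ u k i₀ := le_trans (neg_le_neg b3) (neg_abs_le _)
  have w4 : u k (i₀ + 1) ≤ B := le_trans (le_abs_self _) b4
  have w4' : -B ≤ u k (i₀ + 1) := le_trans (neg_le_neg b4) (neg_abs_le _)
  have w5 : u k (i₀ - 1) ≤ B := le_trans (le_abs_self _) b5
  have w5' : -B ≤ u k (i₀ - 1) := le_trans (neg_le_neg b5) (neg_abs_le _)
  have hτpA : 0 ≤ τ * p (k + 1) * A :=
    mul_nonneg (mul_nonneg hτ.le hp'.le) hA0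
  have hcoef : 0 ≤ 1 - τ / h ^ 2 := by linarith
  set c := τ / (2 * h ^ 2) with hcdef
  set P := τ * p (k + 1) with hPdef
  have hP0 : 0 ≤ P := (mul_pos hτ hp').le
  have hac : τ / h ^ 2 = 2 * c := by rw [hcdef]; ring
  rw [hac] at E hcoef
  have hPA : 0 ≤ P * A := mul_nonneg hP0 hA0
  rcases abs_cases (u (k + 1) i₀) with ⟨he, _⟩ | ⟨he, _⟩
  · have hui : u (k + 1) i₀ = A := by rw [hAi, he]
    rw [hui] at E
    have E' : A + 2 * (c * A) + P * A =
        c * u (k + 1) (i₀ + 1) + c * u (k + 1) (i₀ - 1) +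
        (u k i₀ - 2 * (c * u k i₀)) + c * u k (i₀ + 1) + c * u k (i₀ - 1) := by
      linear_combination E
    have t1 : 0 ≤ c * (A - u (k + 1) (i₀ + 1)) := mul_nonneg hc.le (by linarith)
    have t2 : 0 ≤ c * (A - u (k + 1) (i₀ - 1)) := mul_nonneg hc.le (by linarith)
    have t3 : 0 ≤ (1 - 2 * c) * (B - u k i₀) := mul_nonneg hcoef (by linarith)
    have t4 : 0 ≤ c * (B - u k (i₀ + 1)) := mul_nonneg hc.le (by linarith)
    have t5 : 0 ≤ c * (B - u k (i₀ - 1)) := mul_nonneg hc.le (by linarith)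
    have t1' : c * u (k + 1) (i₀ + 1) ≤ c * A := by rw [mul_sub] at t1; linarith
    have t2' : c * u (k + 1) (i₀ - 1) ≤ c * A := by rw [mul_sub] at t2; linarith
    have t3' : u k i₀ - 2 * (c * u k i₀) ≤ B - 2 * (c * B) := by
      rw [sub_mul, one_mul] at t3; linarith
    have t4' : c * u k (i₀ + 1) ≤ c * B := by rw [mul_sub] at t4; linarith
    have t5' : c * u k (i₀ - 1) ≤ c * B := by rw [mul_sub] at t5; linarith
    linarith
  · have hui : u (k + 1) i₀ = -A := by
      have : -u (k + 1) i₀ = A := by rw [hAi, he]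
      linarith
    rw [hui] at E
    have E' : -A - 2 * (c * A) - P * A =
        c * u (k + 1) (i₀ + 1) + c * u (k + 1) (i₀ - 1) +
        (u k i₀ - 2 * (c * u k i₀)) + c * u k (i₀ + 1) + c * u k (i₀ - 1) := by
      linear_combination E
    have t1 : 0 ≤ c * (u (k + 1) (i₀ + 1) + A) := mul_nonneg hc.le (by linarith)
    have t2 : 0 ≤ c * (u (k + 1) (i₀ - 1) + A) := mul_nonneg hc.le (by linarith)
    have t3 : 0 ≤ (1 - 2 * c) * (u k i₀ + B) := mul_nonneg hcoef (by linarith)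
    have t4 : 0 ≤ c * (u k (i₀ + 1) + B) := mul_nonneg hc.le (by linarith)
    have t5 : 0 ≤ c * (u k (i₀ - 1) + B) := mul_nonneg hc.le (by linarith)
    have t1' : -(c * A) ≤ c * u (k + 1) (i₀ + 1) := by rw [mul_add] at t1; linarith
    have t2' : -(c * A) ≤ c * u (k + 1) (i₀ - 1) := by rw [mul_add] at t2; linarith
    have t3' : -B + 2 * (c * B) ≤ u k i₀ - 2 * (c * u k i₀) := by
      rw [sub_mul, one_mul] at t3; linarith
    have t4' : -(c * B) ≤ c * u k (i₀ + 1) := by rw [mul_add] at t4; linarith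
    have t5' : -(c * B) ≤ c * u k (i₀ - 1) := by rw [mul_add] at t5; linarith
    linarith
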